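/- Triangularity: for semistandard tableaux T_k, T_l, T_i, T_j of shape λ, if C_L(T_k) T[i:j] ≠ 0 then T_k ⊴_c T_i, and if T[i:j] C_P(T_l) ≠ 0 then T_l ⊴_r T_j. -/

import Mathlib

open Finset TensorProduct
open scoped Classical

noncomputable section

namespace Schur

variable {X : Type*}

/-- Parity of the even symbols `0,...,m-1` is `0`, of the odd symbols `m,...,m+n-1` is `1`. -/
def degp (m n : ℕ) : Fin (m + n) → ℕ := fun x => if x.val < m then 0 else 1

/-- Supercommutativity relations for the generators `c_{uv}` of `A(m|n)`. -/
def Rel (K : Type*) [CommRing K] (par : X → ℕ) :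
    FreeAlgebra K (X × X) → FreeAlgebra K (X × X) → Prop := fun a b =>
  ∃ u v : X × X,
    a = FreeAlgebra.ι K u * FreeAlgebra.ι K v ∧
    b = ((-1 : K) ^ ((par u.1 + par u.2) * (par v.1 + par v.2))) •
        (FreeAlgebra.ι K v * FreeAlgebra.ι K u)

/-- The supersymmetric bialgebra `A(m|n)` (as an algebra). -/
abbrev A (K : Type*) [CommRing K] (par : X → ℕ) := RingQuot (Rel K par)

/-- The generator `c_{uv}`. -/
def gen (K : Type*) [CommRing K] (par : X → ℕ) (u v : X) : A K par :=
  RingQuot.mkAlgHom K (Rel K par) (FreeAlgebra.ι K (u, v))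

variable (r : ℕ)

/-- The sign relating `χ_{i,j}` to the ordered monomial `c_{i_1 j_1} ⋯ c_{i_r j_r}`. -/
def chiSign (par : X → ℕ) (i j : Fin r → X) : ℤ :=
  (-1) ^ (∑ t : Fin r, par (i t) *
    ∑ s ∈ univ.filter (fun s => t < s), (par (i s) + par (j s)))

/-- The signed monomial `χ_{i,j}` in `A(m|n,r)`. -/
def chi (K : Type*) [CommRing K] (par : X → ℕ) (i j : Fin r → X) : A K par :=
  chiSign r par i j • ((List.finRange r).map (fun t => gen K par (i t) (j t))).prod

/-- The sign `(-1)^{s(j,π)}` of the `*`-action: it counts inversions of `π` among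
odd entries of `j`. -/
def starSign (par : X → ℕ) (j : Fin r → X) (π : Equiv.Perm (Fin r)) : ℤ :=
  (-1) ^ (univ.filter (fun p : Fin r × Fin r =>
      p.1 < p.2 ∧ π p.2 < π p.1 ∧ par (j p.1) ≠ 0 ∧ par (j p.2) ≠ 0)).card

/-- A basic tableau: a partition shape `lam` together with a bijective labelling of
its cells `(row, col)` by `{1,...,r}`. -/
structure BasicTableau (r : ℕ) where
  lam : ℕ → ℕ
  antitone : ∀ a b : ℕ, a ≤ b → lam b ≤ lam a
  pos : Fin r → ℕ × ℕ
  mem : ∀ t, (pos t).2 < lam (pos t).1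
  inj : Function.Injective pos
  surj : ∀ c : ℕ × ℕ, c.2 < lam c.1 → ∃ t, pos t = c

/-- The row stabilizer `R(T)`. -/
def rowStab (T : BasicTableau r) : Finset (Equiv.Perm (Fin r)) :=
  univ.filter (fun σ => ∀ t, (T.pos (σ t)).1 = (T.pos t).1)

/-- The column stabilizer `C(T)`. -/
def colStab (T : BasicTableau r) : Finset (Equiv.Perm (Fin r)) :=
  univ.filter (fun σ => ∀ t, (T.pos (σ t)).2 = (T.pos t).2)

/-- The symmetrizer `T[i:j] = Σ_{ρ∈R(T)} Σ_{κ∈C(T)} sgn(κ) χ_{i*ρ, j*κ}`. -/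
def symmA (K : Type*) [CommRing K] (par : X → ℕ) (T : BasicTableau r)
    (i j : Fin r → X) : A K par :=
  ∑ ρ ∈ rowStab r T, ∑ κ ∈ colStab r T,
    ((Equiv.Perm.sign κ : ℤ) * starSign r par i ρ * starSign r par j κ) •
      chi r K par (i ∘ ρ) (j ∘ κ)

/-- The symmetrizer in the form `T[i:j] = Σ_{ρ∈R(T)} Σ_{κ∈C(T)} sgn(κ) χ_{i, j*κ*ρ}`. -/
def symmB (K : Type*) [CommRing K] (par : X → ℕ) (T : BasicTableau r)
    (i j : Fin r → X) : A K par :=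
  ∑ ρ ∈ rowStab r T, ∑ κ ∈ colStab r T,
    ((Equiv.Perm.sign κ : ℤ) * starSign r par j κ * starSign r par (j ∘ κ) ρ) •
      chi r K par i (j ∘ κ ∘ ρ)

/-- The symmetrizer in the form `T[i:j] = Σ_{κ∈C(T)} Σ_{ρ∈R(T)} sgn(κ) χ_{i*ρ*κ, j}`. -/
def symmC (K : Type*) [CommRing K] (par : X → ℕ) (T : BasicTableau r)
    (i j : Fin r → X) : A K par :=
  ∑ κ ∈ colStab r T, ∑ ρ ∈ rowStab r T,
    ((Equiv.Perm.sign κ : ℤ) * starSign r par i ρ * starSign r par (i ∘ ρ) κ) •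
      chi r K par (i ∘ ρ ∘ κ) j

/-- Semistandardness (in the super sense) of the filling `j` of the tableau `T`. -/
def Semistandard [LinearOrder X] (par : X → ℕ) (T : BasicTableau r)
    (j : Fin r → X) : Prop :=
  (∀ t s, (T.pos t).1 = (T.pos s).1 → (T.pos t).2 ≤ (T.pos s).2 → j t ≤ j s) ∧
  (∀ t s, (T.pos t).2 = (T.pos s).2 → (T.pos t).1 ≤ (T.pos s).1 → j t ≤ j s) ∧
  (∀ t s, t ≠ s → (T.pos t).2 = (T.pos s).2 → par (j t) = 0 → j t ≠ j s) ∧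
  (∀ t s, t ≠ s → (T.pos t).1 = (T.pos s).1 → par (j t) ≠ 0 → j t ≠ j s)

/-- `r_{qp}`: the number of entries `≤ p` in the first `q` rows. -/
def rCount [LinearOrder X] (T : BasicTableau r) (j : Fin r → X) (q : ℕ) (p : X) : ℕ :=
  (univ.filter (fun t => (T.pos t).1 < q ∧ j t ≤ p)).card

/-- `c_{qp}`: the number of entries `≤ p` in the first `q` columns. -/
def cCount [LinearOrder X] (T : BasicTableau r) (j : Fin r → X) (q : ℕ) (p : X) : ℕ :=
  (univ.filter (fun t => (T.pos t).2 < q ∧ j t ≤ p)).card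

/-- Row dominance preorder `T_l ⊴_r T_j`: `(r_{qp}(l)) ≤_lex (r_{qp}(j))`,
listing first by `q`, then by `p`. -/
def rowDom [LinearOrder X] (T : BasicTableau r) (l j : Fin r → X) : Prop :=
  (∀ q p, rCount r T l q p = rCount r T j q p) ∨
  ∃ (q : ℕ) (p : X), rCount r T l q p < rCount r T j q p ∧
    ∀ (q' : ℕ) (p' : X), (q' < q ∨ (q' = q ∧ p' < p)) →
      rCount r T l q' p' = rCount r T j q' p'

/-- Column dominance preorder `T_k ⊴_c T_i`: `(c_{qp}(k)) ≤_lex (c_{qp}(i))`. -/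
def colDom [LinearOrder X] (T : BasicTableau r) (k i : Fin r → X) : Prop :=
  (∀ q p, cCount r T k q p = cCount r T i q p) ∨
  ∃ (q : ℕ) (p : X), cCount r T k q p < cCount r T i q p ∧
    ∀ (q' : ℕ) (p' : X), (q' < q ∨ (q' = q ∧ p' < p)) →
      cCount r T k q' p' = cCount r T i q' p'

/-- `σ` moves only points of `Z`; i.e. `σ ∈ S_Z`. -/
def fixesOutside (Z : Finset (Fin r)) (σ : Equiv.Perm (Fin r)) : Prop :=
  ∀ t, t ∉ Z → σ t = t

/-- Membership in the subgroup `S_X × S_Y` of `S_{X∪Y}`. -/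
def prodSub (Xs Ys : Finset (Fin r)) (σ : Equiv.Perm (Fin r)) : Prop :=
  (∀ t ∈ Xs, σ t ∈ Xs) ∧ (∀ t ∈ Ys, σ t ∈ Ys) ∧ fixesOutside r (Xs ∪ Ys) σ

/-- Two fillings have the same content. -/
def sameContent (i j : Fin r → X) : Prop :=
  ∀ v : X, (univ.filter (fun t => i t = v)).card = (univ.filter (fun t => j t = v)).card

/-- `f < g` in the column lexicographic order: at the first cell (reading column by
column, each column top to bottom) where they differ, `f` is smaller. -/
def colLexLt [LinearOrder X] (T : BasicTableau r) (f g : Fin r → X) : Prop :=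
  ∃ t, f t < g t ∧ ∀ s,
    ((T.pos s).2 < (T.pos t).2 ∨ ((T.pos s).2 = (T.pos t).2 ∧ (T.pos s).1 < (T.pos t).1)) →
    f s = g s

/-- `r(T_i)`: product of factorials of row multiplicities of even symbols. -/
def rFact [Fintype X] (par : X → ℕ) (T : BasicTableau r) (i : Fin r → X) : ℕ :=
  ∏ a : X, ∏ q ∈ Finset.range r,
    if par a = 0 then
      Nat.factorial (univ.filter (fun t => i t = a ∧ (T.pos t).1 = q)).card
    else 1

/-- `c(T_j)`: product of factorials of column multiplicities of odd symbols. -/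
def cFact [Fintype X] (par : X → ℕ) (T : BasicTableau r) (j : Fin r → X) : ℕ :=
  ∏ a : X, ∏ q ∈ Finset.range r,
    if par a ≠ 0 then
      Nat.factorial (univ.filter (fun t => j t = a ∧ (T.pos t).2 = q)).card
    else 1

/-- The modified symmetrizer `T{i:j} = T[i:j]/(r(T_i)c(T_j))` over `ℚ`. -/
def modSymm (m n : ℕ) (T : BasicTableau r) (i j : Fin r → Fin (m + n)) :
    A ℚ (degp m n) :=
  (((rFact r (degp m n) T i * cFact r (degp m n) T j : ℕ) : ℚ))⁻¹ •
    symmA r ℚ (degp m n) T i j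


/-- The extended superalphabet: uncolored symbols, colored even symbols `j̲`,
and colored odd symbols `j̄`. -/
abbrev Xext (m n : ℕ) := Fin (m + n) ⊕ ℕ ⊕ ℕ

/-- Parity on the extended alphabet. -/
def parExt (m n : ℕ) : Xext m n → ℕ :=
  Sum.elim (degp m n) (Sum.elim (fun _ => 0) (fun _ => 1))

/-- `g` is one of the summands of `C_L(T_k)` applied to the filling `f`: for each
symbol `a` and column `c`, exactly `c_a(T_k,c)` occurrences of `a` in `f` are replaced
by the colored odd symbol `c̄`. -/
def ReplacedL (m n r : ℕ) (T : BasicTableau r) (k : Fin r → Fin (m + n))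
    (f g : Fin r → Xext m n) : Prop :=
  (∀ t, g t = f t ∨ ((∃ a, f t = Sum.inl a) ∧ ∃ c : ℕ, g t = Sum.inr (Sum.inr c))) ∧
  ∀ (a : Fin (m + n)) (c : ℕ),
    (univ.filter (fun t => f t = Sum.inl a ∧ g t = Sum.inr (Sum.inr c))).card =
    (univ.filter (fun t => k t = a ∧ (T.pos t).2 = c)).card

/-- `h` is one of the summands of `C_P(T_l)` applied to the filling `f`: for each
symbol `a` and row `c`, exactly `r_a(T_l,c)` occurrences of `a` in `f` are replaced
by the colored even symbol `c̲`. -/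
def ReplacedP (m n r : ℕ) (T : BasicTableau r) (l : Fin r → Fin (m + n))
    (f h : Fin r → Xext m n) : Prop :=
  (∀ t, h t = f t ∨ ((∃ a, f t = Sum.inl a) ∧ ∃ c : ℕ, h t = Sum.inr (Sum.inl c))) ∧
  ∀ (a : Fin (m + n)) (c : ℕ),
    (univ.filter (fun t => f t = Sum.inl a ∧ h t = Sum.inr (Sum.inl c))).card =
    (univ.filter (fun t => l t = a ∧ (T.pos t).1 = c)).card


section AuxLemmas

variable {X : Type*} {r : ℕ}

lemma starSign_odd_eq_signAux (par : X → ℕ) (g : Fin r → X) (hg : ∀ t, par (g t) ≠ 0)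
    (π : Equiv.Perm (Fin r)) :
    starSign r par g π = ((Equiv.Perm.signAux π : ℤˣ) : ℤ) := by
  unfold starSign
  have h1 : (univ.filter (fun p : Fin r × Fin r =>
      p.1 < p.2 ∧ π p.2 < π p.1 ∧ par (g p.1) ≠ 0 ∧ par (g p.2) ≠ 0)) =
      univ.filter (fun p : Fin r × Fin r => p.1 < p.2 ∧ π p.2 < π p.1) := by
    apply Finset.filter_congr
    intro x _
    simp [hg]
  rw [h1]
  have h2 : ((Equiv.Perm.signAux π : ℤˣ) : ℤ) =
      ∏ x ∈ Equiv.Perm.finPairsLT r, (if π x.1 ≤ π x.2 then (-1 : ℤ) else 1) := by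
    rw [Equiv.Perm.signAux, Units.coe_prod]
    apply Finset.prod_congr rfl
    intro x _
    rw [apply_ite (Units.val : ℤˣ → ℤ)]
    simp
  rw [h2, Finset.prod_ite, Finset.prod_const, Finset.prod_const, one_pow, mul_one]
  congr 1
  apply Finset.card_bij (fun (p : Fin r × Fin r) _ => (⟨p.2, p.1⟩ : Σ _ : Fin r, Fin r))
  · intro p hp
    obtain ⟨-, h1, h2⟩ := Finset.mem_filter.mp hp
    exact Finset.mem_filter.mpr ⟨Equiv.Perm.mem_finPairsLT.mpr h1, le_of_lt h2⟩
  · intro p hp p' hp' heq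
    have e1 : p.2 = p'.2 := congrArg Sigma.fst heq
    have e2 : p.1 = p'.1 := by
      have := congrArg (fun s : Σ _ : Fin r, Fin r => s.2) heq
      simpa using this
    exact Prod.ext e2 e1
  · intro x hx
    obtain ⟨hx1, hx2⟩ := Finset.mem_filter.mp hx
    rw [Equiv.Perm.mem_finPairsLT] at hx1
    refine ⟨(x.2, x.1), Finset.mem_filter.mpr ⟨Finset.mem_univ _, hx1, ?_⟩, rfl⟩
    have hne : x.1 ≠ x.2 := fun h => absurd (h ▸ hx1) (lt_irrefl _)
    exact lt_of_le_of_ne hx2 (fun h => hne (π.injective h))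

lemma starSign_odd_swap_mul (par : X → ℕ) (g : Fin r → X) (hg : ∀ t, par (g t) ≠ 0)
    {a b : Fin r} (hab : a ≠ b) (ρ : Equiv.Perm (Fin r)) :
    starSign r par g (Equiv.swap a b * ρ) = - starSign r par g ρ := by
  rw [starSign_odd_eq_signAux par g hg, starSign_odd_eq_signAux par g hg,
    Equiv.Perm.signAux_mul, Equiv.Perm.signAux_swap hab]
  simp

lemma starSign_even (par : X → ℕ) (h : Fin r → X) (hh : ∀ t, par (h t) = 0)
    (π : Equiv.Perm (Fin r)) : starSign r par h π = 1 := by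
  unfold starSign
  have h1 : (univ.filter (fun p : Fin r × Fin r =>
      p.1 < p.2 ∧ π p.2 < π p.1 ∧ par (h p.1) ≠ 0 ∧ par (h p.2) ≠ 0)) = ∅ := by
    apply Finset.filter_false_of_mem
    intro x _
    simp [hh]
  rw [h1]
  simp

end AuxLemmas


section SymmAZero

variable {X : Type*} {r : ℕ}

lemma symmA_eq_zero_left (K : Type*) [CommRing K] (par : X → ℕ) (T : BasicTableau r)
    (g j' : Fin r → X) (hodd : ∀ t, par (g t) ≠ 0)
    {t₀ s₀ : Fin r} (hne : t₀ ≠ s₀) (hrow : (T.pos t₀).1 = (T.pos s₀).1)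
    (hgg : g t₀ = g s₀) : symmA r K par T g j' = 0 := by
  set σ := Equiv.swap t₀ s₀ with hσ
  have hgσ : ∀ x, g (σ x) = g x := by
    intro x
    rcases eq_or_ne x t₀ with rfl | hx1
    · rw [hσ, Equiv.swap_apply_left]; exact hgg.symm
    rcases eq_or_ne x s₀ with rfl | hx2
    · rw [hσ, Equiv.swap_apply_right]; exact hgg
    · rw [hσ, Equiv.swap_apply_of_ne_of_ne hx1 hx2]
  have hrowσ : ∀ x, (T.pos (σ x)).1 = (T.pos x).1 := by
    intro x
    rcases eq_or_ne x t₀ with rfl | hx1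
    · rw [hσ, Equiv.swap_apply_left, ← hrow]
    rcases eq_or_ne x s₀ with rfl | hx2
    · rw [hσ, Equiv.swap_apply_right, hrow]
    · rw [hσ, Equiv.swap_apply_of_ne_of_ne hx1 hx2]
  unfold symmA
  apply Finset.sum_involution (g := fun ρ _ => σ * ρ)
  · intro ρ _
    have hcomp : g ∘ ⇑(σ * ρ) = g ∘ ⇑ρ := by
      funext x
      simp only [Function.comp_apply, Equiv.Perm.mul_apply]
      exact hgσ (ρ x)
    have hstar : starSign r par g (σ * ρ) = - starSign r par g ρ :=
      starSign_odd_swap_mul par g hodd hne ρ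
    rw [← Finset.sum_add_distrib]
    apply Finset.sum_eq_zero
    intro κ _
    rw [hcomp, hstar]
    erw [← add_smul]
    convert zero_smul ℤ _
    ring
  · intro ρ _ _
    intro h
    have : σ = 1 := by
      have := congrArg (fun τ => τ * ρ⁻¹) h
      simpa [mul_assoc] using this
    have ht : σ t₀ = t₀ := by rw [this]; rfl
    rw [hσ, Equiv.swap_apply_left] at ht
    exact hne ht.symm
  · intro ρ hρ
    rw [rowStab, Finset.mem_filter] at hρ ⊢
    refine ⟨Finset.mem_univ _, fun t => ?_⟩
    rw [Equiv.Perm.mul_apply, hrowσ]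
    exact hρ.2 t
  · intro ρ _
    rw [← mul_assoc, hσ, Equiv.swap_mul_self, one_mul]

lemma symmA_eq_zero_right (K : Type*) [CommRing K] (par : X → ℕ) (T : BasicTableau r)
    (i' h : Fin r → X) (heven : ∀ t, par (h t) = 0)
    {t₀ s₀ : Fin r} (hne : t₀ ≠ s₀) (hcol : (T.pos t₀).2 = (T.pos s₀).2)
    (hhh : h t₀ = h s₀) : symmA r K par T i' h = 0 := by
  set σ := Equiv.swap t₀ s₀ with hσ
  have hhσ : ∀ x, h (σ x) = h x := by
    intro x
    rcases eq_or_ne x t₀ with rfl | hx1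
    · rw [hσ, Equiv.swap_apply_left]; exact hhh.symm
    rcases eq_or_ne x s₀ with rfl | hx2
    · rw [hσ, Equiv.swap_apply_right]; exact hhh
    · rw [hσ, Equiv.swap_apply_of_ne_of_ne hx1 hx2]
  have hcolσ : ∀ x, (T.pos (σ x)).2 = (T.pos x).2 := by
    intro x
    rcases eq_or_ne x t₀ with rfl | hx1
    · rw [hσ, Equiv.swap_apply_left, ← hcol]
    rcases eq_or_ne x s₀ with rfl | hx2
    · rw [hσ, Equiv.swap_apply_right, hcol]
    · rw [hσ, Equiv.swap_apply_of_ne_of_ne hx1 hx2]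
  unfold symmA
  apply Finset.sum_eq_zero
  intro ρ _
  apply Finset.sum_involution (g := fun κ _ => σ * κ)
  · intro κ _
    have hcomp : h ∘ ⇑(σ * κ) = h ∘ ⇑κ := by
      funext x
      simp only [Function.comp_apply, Equiv.Perm.mul_apply]
      exact hhσ (κ x)
    have hsgn : ((Equiv.Perm.sign (σ * κ) : ℤˣ) : ℤ) = - ((Equiv.Perm.sign κ : ℤˣ) : ℤ) := by
      rw [map_mul, hσ, Equiv.Perm.sign_swap hne]
      simp
    have hstar : starSign r par h (σ * κ) = starSign r par h κ := by
      rw [starSign_even par h heven, starSign_even par h heven]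
    rw [hcomp, hsgn, hstar]
    erw [← add_smul]
    convert zero_smul ℤ _
    ring
  · intro κ _ _
    intro hcontra
    have : σ = 1 := by
      have := congrArg (fun τ => τ * κ⁻¹) hcontra
      simpa [mul_assoc] using this
    have ht : σ t₀ = t₀ := by rw [this]; rfl
    rw [hσ, Equiv.swap_apply_left] at ht
    exact hne ht.symm
  · intro κ hκ
    rw [colStab, Finset.mem_filter] at hκ ⊢
    refine ⟨Finset.mem_univ _, fun t => ?_⟩
    rw [Equiv.Perm.mul_apply, hcolσ]
    exact hκ.2 t
  · intro κ _
    rw [← mul_assoc, hσ, Equiv.swap_mul_self, one_mul]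

end SymmAZero


section Lex


/-- A downward-closed finset of naturals is an initial segment. -/
lemma downclosed_eq_range (S : Finset ℕ) (h : ∀ x ∈ S, ∀ y, y < x → y ∈ S) :
    S = Finset.range S.card := by
  have hsub : S ⊆ Finset.range S.card := by
    intro x hx
    rw [Finset.mem_range]
    have h1 : Finset.range (x + 1) ⊆ S := by
      intro y hy
      rw [Finset.mem_range, Nat.lt_succ_iff] at hy
      rcases lt_or_eq_of_le hy with h2 | h2
      · exact h x hx y h2
      · rwa [h2]
    calc x < x + 1 := Nat.lt_succ_self x
      _ = (Finset.range (x + 1)).card := (Finset.card_range _).symm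
      _ ≤ S.card := Finset.card_le_card h1
  exact Finset.eq_of_subset_of_card_le hsub (le_of_eq (Finset.card_range _))

lemma dom_of_forall_le {N : ℕ} (F G : ℕ → Fin N → ℕ) (hle : ∀ q p, F q p ≤ G q p) :
    (∀ q p, F q p = G q p) ∨
    ∃ (q : ℕ) (p : Fin N), F q p < G q p ∧ ∀ (q' : ℕ) (p' : Fin N),
      (q' < q ∨ (q' = q ∧ p' < p)) → F q' p' = G q' p' := by
  by_cases hall : ∀ q p, F q p = G q p
  · exact Or.inl hall
  push_neg at hall
  have hex : ∃ q, ∃ p, F q p ≠ G q p := hall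
  right
  obtain ⟨p₁, hp₁⟩ := Nat.find_spec hex
  set Pst := univ.filter (fun p : Fin N => F (Nat.find hex) p ≠ G (Nat.find hex) p) with hPst
  have hPne : Pst.Nonempty := ⟨p₁, by simp [hPst, hp₁]⟩
  set p₀ := Finset.min' Pst hPne with hp₀def
  have hp₀ : F (Nat.find hex) p₀ ≠ G (Nat.find hex) p₀ :=
    (Finset.mem_filter.mp (Finset.min'_mem _ hPne)).2
  refine ⟨Nat.find hex, p₀, lt_of_le_of_ne (hle _ _) hp₀, ?_⟩
  rintro q' p' (hq' | ⟨rfl, hp'⟩)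
  · by_contra hne
    exact Nat.find_min hex hq' ⟨p', hne⟩
  · by_contra hne
    have : p₀ ≤ p' := Finset.min'_le Pst p' (by rw [hPst]; exact Finset.mem_filter.mpr ⟨Finset.mem_univ _, hne⟩)
    exact absurd hp' (not_lt.mpr this)


end Lex

section Counting

variable {r : ℕ}

lemma all_colored {σY Y : Type*} [Fintype σY] [DecidableEq σY] [DecidableEq Y]
    (iv kv : Fin r → σY) (pc : Fin r → ℕ) (g : Fin r → Y)
    (emb : ℕ → Y) (hemb : Function.Injective emb)
    (hcnt : ∀ (a : σY) (c : ℕ),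
      (univ.filter fun t => iv t = a ∧ g t = emb c).card =
      (univ.filter fun t => kv t = a ∧ pc t = c).card) :
    ∀ t, ∃ c, g t = emb c := by
  set C := univ.image pc with hC
  set Pset := (univ : Finset σY) ×ˢ C with hP
  set U := univ.filter (fun t => ∃ c ∈ C, g t = emb c) with hU
  have h1 : (univ : Finset (Fin r)).card =
      ∑ z ∈ Pset, (univ.filter fun t => kv t = z.1 ∧ pc t = z.2).card := by
    rw [Finset.card_eq_sum_card_fiberwise
      (f := fun t => (kv t, pc t)) (t := Pset)
      (fun t _ => Finset.mem_product.mpr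
        ⟨Finset.mem_univ _, Finset.mem_image_of_mem pc (Finset.mem_univ t)⟩)]
    apply Finset.sum_congr rfl
    intro z _
    congr 1
    ext t
    simp [Prod.ext_iff]
  have h2 : U.card = ∑ z ∈ Pset, (univ.filter fun t => iv t = z.1 ∧ g t = emb z.2).card := by
    rw [Finset.card_eq_sum_card_fiberwise
      (f := fun t => (iv t, Function.invFun emb (g t))) (t := Pset) ?memb]
    case memb =>
      intro t ht
      rw [Finset.mem_coe, hU, Finset.mem_filter] at ht
      obtain ⟨-, c, hcC, hgc⟩ := ht
      refine Finset.mem_product.mpr ⟨Finset.mem_univ _, ?_⟩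
      show Function.invFun emb (g t) ∈ C
      rw [hgc, Function.leftInverse_invFun hemb c]
      exact hcC
    apply Finset.sum_congr rfl
    intro z hz
    congr 1
    ext t
    constructor
    · intro ht
      obtain ⟨htU, hpair⟩ := Finset.mem_filter.mp ht
      rw [hU, Finset.mem_filter] at htU
      obtain ⟨-, c, hcC, hgc⟩ := htU
      have hinv : Function.invFun emb (g t) = c := by
        rw [hgc]; exact Function.leftInverse_invFun hemb c
      have hz1 : iv t = z.1 := congrArg Prod.fst hpair
      have hz2 : Function.invFun emb (g t) = z.2 := congrArg Prod.snd hpair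
      refine Finset.mem_filter.mpr ⟨Finset.mem_univ _, hz1, ?_⟩
      rw [hgc, ← hinv, hz2]
    · intro ht
      obtain ⟨-, hz1, hz2⟩ := Finset.mem_filter.mp ht
      have hz2C : z.2 ∈ C := (Finset.mem_product.mp hz).2
      refine Finset.mem_filter.mpr ⟨?_, ?_⟩
      · rw [hU, Finset.mem_filter]
        exact ⟨Finset.mem_univ _, z.2, hz2C, hz2⟩
      · have : Function.invFun emb (g t) = z.2 := by
          rw [hz2]; exact Function.leftInverse_invFun hemb z.2
        rw [Prod.ext_iff]
        exact ⟨hz1, this⟩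
  have h3 : U.card = (univ : Finset (Fin r)).card := by
    rw [h2, h1]
    exact Finset.sum_congr rfl (fun z _ => hcnt z.1 z.2)
  have hUuniv : U = univ :=
    Finset.eq_of_subset_of_card_le (Finset.filter_subset _ _) (ge_of_eq h3)
  intro t
  have ht : t ∈ U := hUuniv ▸ Finset.mem_univ t
  rw [hU, Finset.mem_filter] at ht
  obtain ⟨-, c, -, hgc⟩ := ht
  exact ⟨c, hgc⟩

lemma count_le {N : ℕ}
    (pos : Fin r → ℕ × ℕ) (hposinj : Function.Injective pos)
    (hcell : ∀ (t : Fin r) (y : ℕ), y < (pos t).2 → ∃ s : Fin r, pos s = ((pos t).1, y))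
    (k i : Fin r → Fin N) (γ : Fin r → ℕ)
    (hmono : ∀ t s, (pos t).1 = (pos s).1 → (pos t).2 ≤ (pos s).2 → i t ≤ i s)
    (hγ : ∀ t s, t ≠ s → (pos t).1 = (pos s).1 → γ t ≠ γ s)
    (hcnt : ∀ (a : Fin N) (c : ℕ),
      (univ.filter (fun t => i t = a ∧ γ t = c)).card =
      (univ.filter (fun t => k t = a ∧ (pos t).2 = c)).card)
    (q : ℕ) (p : Fin N) :
    (univ.filter (fun t => (pos t).2 < q ∧ k t ≤ p)).card ≤
    (univ.filter (fun t => (pos t).2 < q ∧ i t ≤ p)).card := by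
  set Pset := (univ.filter (fun a : Fin N => a ≤ p)) ×ˢ Finset.range q with hPset
  have key : ∀ (v : Fin r → Fin N) (c2 : Fin r → ℕ),
      (univ.filter (fun t => c2 t < q ∧ v t ≤ p)).card =
      ∑ z ∈ Pset, (univ.filter fun t => v t = z.1 ∧ c2 t = z.2).card := by
    intro v c2
    rw [Finset.card_eq_sum_card_fiberwise (f := fun t => (v t, c2 t)) (t := Pset) ?memb]
    case memb =>
      intro t ht
      obtain ⟨-, h1, h2⟩ := Finset.mem_filter.mp ht
      exact Finset.mem_product.mpr
        ⟨Finset.mem_filter.mpr ⟨Finset.mem_univ _, h2⟩, Finset.mem_range.mpr h1⟩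
    apply Finset.sum_congr rfl
    intro z hz
    obtain ⟨hz1, hz2⟩ := Finset.mem_product.mp hz
    have hz1' : z.1 ≤ p := (Finset.mem_filter.mp hz1).2
    have hz2' : z.2 < q := Finset.mem_range.mp hz2
    congr 1
    ext t
    simp only [Finset.mem_filter, Finset.mem_univ, true_and, Prod.ext_iff]
    constructor
    · rintro ⟨-, h1, h2⟩; exact ⟨h1, h2⟩
    · rintro ⟨h1, h2⟩
      exact ⟨⟨h2 ▸ hz2', h1 ▸ hz1'⟩, h1, h2⟩
  have e1 : (univ.filter (fun t => (pos t).2 < q ∧ k t ≤ p)).card =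
      (univ.filter (fun t => γ t < q ∧ i t ≤ p)).card := by
    rw [key k (fun t => (pos t).2), key i γ]
    exact (Finset.sum_congr rfl (fun z _ => (hcnt z.1 z.2).symm))
  rw [e1]
  -- now fiberwise over rows
  set Rows := univ.image (fun t : Fin r => (pos t).1) with hRows
  set Aset := univ.filter (fun t => γ t < q ∧ i t ≤ p) with hAset
  set Bset := univ.filter (fun t => (pos t).2 < q ∧ i t ≤ p) with hBset
  have hA : Aset.card = ∑ ρ ∈ Rows, (Aset.filter (fun t => (pos t).1 = ρ)).card :=
    Finset.card_eq_sum_card_fiberwise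
      (fun t _ => Finset.mem_image_of_mem _ (Finset.mem_univ t))
  have hB : Bset.card = ∑ ρ ∈ Rows, (Bset.filter (fun t => (pos t).1 = ρ)).card :=
    Finset.card_eq_sum_card_fiberwise
      (fun t _ => Finset.mem_image_of_mem _ (Finset.mem_univ t))
  rw [hA, hB]
  apply Finset.sum_le_sum
  intro ρ _
  set W := univ.filter (fun t => (pos t).1 = ρ ∧ i t ≤ p) with hW
  -- column map injective on W
  have hcolinj : Set.InjOn (fun t => (pos t).2) ↑W := by
    intro t ht s hs hts
    obtain ⟨-, ht1, -⟩ := Finset.mem_filter.mp ht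
    obtain ⟨-, hs1, -⟩ := Finset.mem_filter.mp hs
    exact hposinj (Prod.ext (ht1.trans hs1.symm) hts)
  have hAsub : Aset.filter (fun t => (pos t).1 = ρ) ⊆ W := by
    intro t ht
    obtain ⟨htA, htρ⟩ := Finset.mem_filter.mp ht
    obtain ⟨-, -, hip⟩ := Finset.mem_filter.mp htA
    exact Finset.mem_filter.mpr ⟨Finset.mem_univ _, htρ, hip⟩
  have hAle1 : (Aset.filter (fun t => (pos t).1 = ρ)).card ≤ W.card :=
    Finset.card_le_card hAsub
  have hAle2 : (Aset.filter (fun t => (pos t).1 = ρ)).card ≤ q := by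
    have := Finset.card_le_card_of_injOn γ
      (s := Aset.filter (fun t => (pos t).1 = ρ)) (t := Finset.range q)
      (fun t ht => by
        obtain ⟨htA, -⟩ := Finset.mem_filter.mp ht
        obtain ⟨-, h1, -⟩ := Finset.mem_filter.mp htA
        exact Finset.mem_range.mpr h1)
      (by
        intro t ht s hs hts
        by_contra hne
        have ht' := Finset.mem_filter.mp (Finset.mem_coe.mp ht)
        have hs' := Finset.mem_filter.mp (Finset.mem_coe.mp hs)
        exact hγ t s hne (ht'.2.trans hs'.2.symm) hts)
    simpa using this
  set Bρ := Bset.filter (fun t => (pos t).1 = ρ) with hBρ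
  set S := W.image (fun t => (pos t).2) with hS
  have hScard : S.card = W.card := Finset.card_image_of_injOn hcolinj
  have hSdown : ∀ x ∈ S, ∀ y, y < x → y ∈ S := by
    intro x hx y hyx
    obtain ⟨t, htW, hxt⟩ := Finset.mem_image.mp hx
    obtain ⟨-, ht1, ht2⟩ := Finset.mem_filter.mp htW
    obtain ⟨s, hposs⟩ := hcell t y (by rw [hxt]; exact hyx)
    have hs1 : (pos s).1 = ρ := by rw [hposs]; exact ht1
    have hs2 : i s ≤ i t := hmono s t (by rw [hposs]) (by
      rw [hposs]
      show y ≤ (pos t).2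
      rw [hxt]
      exact le_of_lt hyx)
    refine Finset.mem_image.mpr ⟨s,
      Finset.mem_filter.mpr ⟨Finset.mem_univ _, hs1, le_trans hs2 ht2⟩, by rw [hposs]⟩
  have hSrange : S = Finset.range W.card := by
    rw [← hScard]
    exact downclosed_eq_range S hSdown
  have hBimg : Bρ.image (fun t => (pos t).2) = Finset.range (min W.card q) := by
    ext x
    simp only [Finset.mem_image, Finset.mem_range, lt_min_iff]
    constructor
    · rintro ⟨t, htB, rfl⟩
      obtain ⟨htBset, htρ⟩ := Finset.mem_filter.mp htB
      obtain ⟨-, htq, htp⟩ := Finset.mem_filter.mp htBset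
      have htW : t ∈ W := Finset.mem_filter.mpr ⟨Finset.mem_univ _, htρ, htp⟩
      have hmem : (pos t).2 ∈ S := Finset.mem_image_of_mem _ htW
      rw [hSrange, Finset.mem_range] at hmem
      exact ⟨hmem, htq⟩
    · rintro ⟨hxw, hxq⟩
      have hxS : x ∈ S := by rw [hSrange]; exact Finset.mem_range.mpr hxw
      obtain ⟨t, htW, hxt⟩ := Finset.mem_image.mp hxS
      obtain ⟨-, ht1, ht2⟩ := Finset.mem_filter.mp htW
      refine ⟨t, ?_, hxt⟩
      refine Finset.mem_filter.mpr ⟨Finset.mem_filter.mpr ⟨Finset.mem_univ _, ?_, ht2⟩, ht1⟩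
      rw [hxt]
      exact hxq
  have hBρsub : Bρ ⊆ W := by
    intro t ht
    obtain ⟨htBset, htρ⟩ := Finset.mem_filter.mp ht
    obtain ⟨-, -, htp⟩ := Finset.mem_filter.mp htBset
    exact Finset.mem_filter.mpr ⟨Finset.mem_univ _, htρ, htp⟩
  have hBcard : Bρ.card = min W.card q := by
    rw [← Finset.card_image_of_injOn (hcolinj.mono (by exact_mod_cast hBρsub)), hBimg,
      Finset.card_range]
  calc (Aset.filter (fun t => (pos t).1 = ρ)).card
      ≤ min W.card q := le_min hAle1 hAle2
    _ = Bρ.card := hBcard.symm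

end Counting



/-- triangularity: for semistandard `T_k, T_l, T_i, T_j`, if
`C_L(T_k) T[i:j] ≠ 0` then `T_k ⊴_c T_i`, and if `T[i:j] C_P(T_l) ≠ 0` then
`T_l ⊴_r T_j`. -/
theorem stmt14 (m n r : ℕ) (K : Type*) [Field K] [CharZero K]
    (T : BasicTableau r) (hook : T.lam m ≤ n)
    (k l i j : Fin r → Fin (m + n))
    (hk : Semistandard r (degp m n) T k) (hl : Semistandard r (degp m n) T l)
    (hi : Semistandard r (degp m n) T i) (hj : Semistandard r (degp m n) T j) :
    ((∑ᶠ g ∈ {g | ReplacedL m n r T k (Sum.inl ∘ i) g},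
        symmA r K (parExt m n) T g (Sum.inl ∘ j)) ≠ 0 → colDom r T k i) ∧
    ((∑ᶠ h ∈ {h | ReplacedP m n r T l (Sum.inl ∘ j) h},
        symmA r K (parExt m n) T (Sum.inl ∘ i) h) ≠ 0 → rowDom r T l j) := by
  constructor
  · -- letter part
    intro hS
    have hex : ∃ g, ReplacedL m n r T k (Sum.inl ∘ i) g ∧
        symmA r K (parExt m n) T g (Sum.inl ∘ j) ≠ 0 := by
      by_contra hcon
      push_neg at hcon
      exact hS (finsum_mem_of_eqOn_zero (fun g hg => hcon g hg))
    obtain ⟨g, hgR, hgNZ⟩ := hex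
    have hemb : Function.Injective (fun c : ℕ => (Sum.inr (Sum.inr c) : Xext m n)) := by
      intro a b h
      simpa using h
    have hcnt0 : ∀ (a : Fin (m + n)) (c : ℕ),
        (univ.filter fun t => i t = a ∧ g t = Sum.inr (Sum.inr c)).card =
        (univ.filter fun t => k t = a ∧ (T.pos t).2 = c).card := by
      intro a c
      rw [← hgR.2 a c]
      congr 1
      apply Finset.filter_congr
      intro t _
      simp [Function.comp]
    have hγex : ∀ t, ∃ c, g t = (fun c : ℕ => (Sum.inr (Sum.inr c) : Xext m n)) c :=
      all_colored i k (fun t => (T.pos t).2) g _ hemb hcnt0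
    choose γ hγ using hγex
    have hodd : ∀ t, parExt m n (g t) ≠ 0 := by
      intro t
      rw [hγ t]
      simp [parExt]
    have hγinj : ∀ t s, t ≠ s → (T.pos t).1 = (T.pos s).1 → γ t ≠ γ s := by
      intro t s htns hrow heq
      exact hgNZ (symmA_eq_zero_left K (parExt m n) T g (Sum.inl ∘ j) hodd htns hrow
        (by rw [hγ t, hγ s, heq]))
    have hcnt : ∀ (a : Fin (m + n)) (c : ℕ),
        (univ.filter (fun t => i t = a ∧ γ t = c)).card =
        (univ.filter (fun t => k t = a ∧ (T.pos t).2 = c)).card := by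
      intro a c
      rw [← hcnt0 a c]
      congr 1
      apply Finset.filter_congr
      intro t _
      rw [hγ t]
      simp
    have hle : ∀ q p, cCount r T k q p ≤ cCount r T i q p := by
      intro q p
      have := count_le T.pos T.inj
        (fun t y hy => T.surj ((T.pos t).1, y) (lt_trans hy (T.mem t)))
        k i γ (fun t s h1 h2 => hi.1 t s h1 h2) hγinj hcnt q p
      unfold cCount
      exact this
    unfold colDom
    exact dom_of_forall_le (fun q p => cCount r T k q p) (fun q p => cCount r T i q p) hle
  · -- place part
    intro hS
    have hex : ∃ h, ReplacedP m n r T l (Sum.inl ∘ j) h ∧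
        symmA r K (parExt m n) T (Sum.inl ∘ i) h ≠ 0 := by
      by_contra hcon
      push_neg at hcon
      exact hS (finsum_mem_of_eqOn_zero (fun h hh => hcon h hh))
    obtain ⟨h, hhR, hhNZ⟩ := hex
    have hemb : Function.Injective (fun c : ℕ => (Sum.inr (Sum.inl c) : Xext m n)) := by
      intro a b hab
      simpa using hab
    have hcnt0 : ∀ (a : Fin (m + n)) (c : ℕ),
        (univ.filter fun t => j t = a ∧ h t = Sum.inr (Sum.inl c)).card =
        (univ.filter fun t => l t = a ∧ (T.pos t).1 = c).card := by
      intro a c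
      rw [← hhR.2 a c]
      congr 1
      apply Finset.filter_congr
      intro t _
      simp [Function.comp]
    have hηex : ∀ t, ∃ c, h t = (fun c : ℕ => (Sum.inr (Sum.inl c) : Xext m n)) c :=
      all_colored j l (fun t => (T.pos t).1) h _ hemb hcnt0
    choose η hη using hηex
    have heven : ∀ t, parExt m n (h t) = 0 := by
      intro t
      rw [hη t]
      simp [parExt]
    have hηinj : ∀ t s, t ≠ s → (T.pos t).2 = (T.pos s).2 → η t ≠ η s := by
      intro t s htns hcol heq
      exact hhNZ (symmA_eq_zero_right K (parExt m n) T (Sum.inl ∘ i) h heven htns hcol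
        (by rw [hη t, hη s, heq]))
    have hcnt : ∀ (a : Fin (m + n)) (c : ℕ),
        (univ.filter (fun t => j t = a ∧ η t = c)).card =
        (univ.filter (fun t => l t = a ∧ (T.pos t).1 = c)).card := by
      intro a c
      rw [← hcnt0 a c]
      congr 1
      apply Finset.filter_congr
      intro t _
      rw [hη t]
      simp
    have hle : ∀ q p, rCount r T l q p ≤ rCount r T j q p := by
      intro q p
      have := count_le (fun t => ((T.pos t).2, (T.pos t).1))
        (fun a b hab => T.inj (Prod.ext (congrArg Prod.snd hab) (congrArg Prod.fst hab)))
        (fun t y hy => by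
          obtain ⟨s, hs⟩ := T.surj (y, (T.pos t).2)
            (lt_of_lt_of_le (T.mem t) (T.antitone y (T.pos t).1 (le_of_lt hy)))
          refine ⟨s, ?_⟩
          rw [Prod.ext_iff] at hs
          exact Prod.ext (by simpa using hs.2) (by simpa using hs.1))
        l j η (fun t s h1 h2 => hj.2.1 t s h1 h2) hηinj hcnt q p
      unfold rCount
      exact this
    unfold rowDom
    exact dom_of_forall_le (fun q p => rCount r T l q p) (fun q p => rCount r T j q p) hle

end Schur
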